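/- Let p0 ∈ (0,1), p1 = 1 − p0, let F0 : ℝ → (0,1) be a differentiable cumulative distribution function with derivative f0(z) > 0, and let 0 < α < 1. Define the Lehmann alternative F1(z) = F0(z)^α with density f1(z) = α·F0(z)^{α−1}·f0(z). With fdr(z) = p0·f0(z)/(p0·f0(z) + p1·f1(z)) and Fdr(z) = p0·F0(z)/(p0·F0(z) + p1·F1(z)), one has for every z ∈ ℝ: log(fdr(z)/(1 − fdr(z))) = log(Fdr(z)/(1 − Fdr(z))) + log(1/α). -/

import Mathlib

open MeasureTheory

/-- For Lehmann alternatives `F1 = F0^α` (0 < α < 1),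
`log(fdr/(1-fdr)) = log(Fdr/(1-Fdr)) + log(1/α)`. -/
theorem lehmann_alternative_log_odds_relation
    (p0 p1 : ℝ) (hp0 : p0 ∈ Set.Ioo (0:ℝ) 1) (hp1 : p1 = 1 - p0)
    (F0 f0 : ℝ → ℝ)
    (hF0range : ∀ z, F0 z ∈ Set.Ioo (0:ℝ) 1)
    (hF0deriv : ∀ z, HasDerivAt F0 (f0 z) z)
    (hf0pos : ∀ z, 0 < f0 z)
    (α : ℝ) (hα : 0 < α) (hα1 : α < 1)
    (F1 f1 : ℝ → ℝ)
    (hF1 : ∀ z, F1 z = F0 z ^ α)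
    (hf1 : ∀ z, f1 z = α * F0 z ^ (α - 1) * f0 z)
    (fdr Fdr : ℝ → ℝ)
    (hfdr : ∀ z, fdr z = p0 * f0 z / (p0 * f0 z + p1 * f1 z))
    (hFdr : ∀ z, Fdr z = p0 * F0 z / (p0 * F0 z + p1 * F1 z)) :
    ∀ z : ℝ, Real.log (fdr z / (1 - fdr z))
      = Real.log (Fdr z / (1 - Fdr z)) + Real.log (1 / α) := by
  intro z
  have hF0pos : 0 < F0 z := (hF0range z).1
  have hp0pos : 0 < p0 := hp0.1
  have hp1pos : 0 < p1 := by rw [hp1]; linarith [hp0.2]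
  have hf1pos : 0 < f1 z := by
    rw [hf1]
    exact mul_pos (mul_pos hα (Real.rpow_pos_of_pos hF0pos _)) (hf0pos z)
  have hF1pos : 0 < F1 z := by rw [hF1]; exact Real.rpow_pos_of_pos hF0pos _
  have ha : 0 < p0 * f0 z := mul_pos hp0pos (hf0pos z)
  have hb : 0 < p1 * f1 z := mul_pos hp1pos hf1pos
  have hA : 0 < p0 * F0 z := mul_pos hp0pos hF0pos
  have hB : 0 < p1 * F1 z := mul_pos hp1pos hF1pos
  have hodds1 : fdr z / (1 - fdr z) = (p0 * f0 z) / (p1 * f1 z) := by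
    rw [hfdr]
    have hs : p0 * f0 z + p1 * f1 z ≠ 0 := by positivity
    field_simp
    ring
  have hodds2 : Fdr z / (1 - Fdr z) = (p0 * F0 z) / (p1 * F1 z) := by
    rw [hFdr]
    have hs : p0 * F0 z + p1 * F1 z ≠ 0 := by positivity
    field_simp
    ring
  rw [hodds1, hodds2]
  have hkey : (p0 * f0 z) / (p1 * f1 z) = (p0 * F0 z) / (p1 * F1 z) * (1 / α) := by
    rw [hf1, hF1]
    have h1 : F0 z ^ (α - 1) = F0 z ^ α / F0 z := by
      rw [Real.rpow_sub hF0pos, Real.rpow_one]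
    rw [h1]
    have hFa : (0:ℝ) < F0 z ^ α := Real.rpow_pos_of_pos hF0pos _
    rw [div_mul_div_comm, mul_one]
    have hd1 : p1 * (α * (F0 z ^ α / F0 z) * f0 z) ≠ 0 :=
      (mul_pos hp1pos (mul_pos (mul_pos hα (div_pos hFa hF0pos)) (hf0pos z))).ne'
    have hd2 : p1 * F0 z ^ α * α ≠ 0 := by positivity
    rw [div_eq_div_iff hd1 hd2]
    field_simp
  rw [hkey]
  exact Real.log_mul (by positivity) (by positivity)
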